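/- Genocchi's sum formula: for all natural numbers m and n with m ≥ n > 1, 2^m · (2^n − 1) · B_n = n · ∑_{k=2}^{m} C(m, k) · ∑_{j=1}^{k−1} (−1)^{j−1} · j^{n−1}. -/

import Mathlib

open Finset Nat PowerSeries
lemma aux_altsum : ∀ m : ℕ, ∀ d : ℕ, d < m →
    ∑ k ∈ range (m+1), (-1:ℚ)^k * (m.choose k) * (k:ℚ)^d = 0 := by
  intro m
  induction m with
  | zero => intro d hd; omega
  | succ m ih =>
    intro d hd
    rw [Finset.sum_range_succ']
    have split : ∀ k ∈ range (m+1), (-1:ℚ)^(k+1) * ((m+1).choose (k+1)) * ((k+1:ℕ):ℚ)^d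
        = (-1:ℚ)^(k+1) * (m.choose (k+1)) * ((k+1:ℕ):ℚ)^d
          + ∑ r ∈ range (d+1), -((d.choose r : ℚ) * ((-1:ℚ)^k * (m.choose k) * (k:ℚ)^r)) := by
      intro k _
      have expand : ((k:ℚ)+1)^d = ∑ r ∈ range (d+1), (k:ℚ)^r * (d.choose r) := by
        rw [add_pow]
        exact Finset.sum_congr rfl fun r _ => by ring
      rw [Nat.choose_succ_succ' m k]
      push_cast
      rw [expand, Finset.mul_sum]
      rw [Finset.mul_sum, ← Finset.sum_add_distrib]
      exact Finset.sum_congr rfl fun r _ => by ring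
    rw [Finset.sum_congr rfl split, Finset.sum_add_distrib]
    have h1 : (∑ k ∈ range (m+1), (-1:ℚ)^(k+1) * (m.choose (k+1)) * ((k+1:ℕ):ℚ)^d)
          + (-1:ℚ)^0 * ((m+1).choose 0) * ((0:ℕ):ℚ)^d
        = ∑ k ∈ range (m+1), (-1:ℚ)^k * (m.choose k) * (k:ℚ)^d := by
      rw [show ((m+1).choose 0 : ℚ) = (m.choose 0 : ℚ) by simp]
      rw [← Finset.sum_range_succ' (fun k => (-1:ℚ)^k * (m.choose k) * (k:ℚ)^d) (m+1)]
      rw [Finset.sum_range_succ, Nat.choose_succ_self]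
      simp
    have h2 : ∑ k ∈ range (m+1), ∑ r ∈ range (d+1),
          -((d.choose r : ℚ) * ((-1:ℚ)^k * (m.choose k) * (k:ℚ)^r))
        = -∑ r ∈ range (d+1), (d.choose r : ℚ) *
            ∑ k ∈ range (m+1), (-1:ℚ)^k * (m.choose k) * (k:ℚ)^r := by
      rw [Finset.sum_comm]
      simp [Finset.mul_sum]
    rw [add_right_comm, h1, h2]
    have h3 : ∀ r ∈ range (d+1), (d.choose r : ℚ) *
        ∑ j ∈ range (m+1), (-1:ℚ)^j * (m.choose j) * (j:ℚ)^r
        = if r = d then ∑ j ∈ range (m+1), (-1:ℚ)^j * (m.choose j) * (j:ℚ)^d else 0 := by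
      intro r hr
      rcases eq_or_ne r d with h | h
      · simp [h]
      · rw [if_neg h, ih r (by simp at hr; omega), mul_zero]
    rw [Finset.sum_congr rfl h3, Finset.sum_ite_eq' (range (d+1)) d]
    simp
lemma aux_ps : rescale (2:ℚ) (bernoulliPowerSeries ℚ) * (exp ℚ - 1)
    = 2 * bernoulliPowerSeries ℚ - 2 * rescale (2:ℚ) (bernoulliPowerSeries ℚ) := by
  set B := bernoulliPowerSeries ℚ
  set B2 := rescale (2:ℚ) B
  set E := exp ℚ
  have hB : B * (E - 1) = X := bernoulliPowerSeries_mul_exp_sub_one ℚ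
  have hB2 : B2 * (E^2 - 1) = C (2:ℚ) * X := by
    have h := congrArg (rescale (2:ℚ)) hB
    rw [map_mul, map_sub, map_one, rescale_X] at h
    rw [exp_pow_eq_rescale_exp]
    simpa using h
  have hne : E^2 - 1 ≠ 0 := by
    intro h
    have := congrArg (coeff (R := ℚ) 1) h
    rw [map_sub, coeff_one, pow_two, coeff_mul,
      Finset.Nat.sum_antidiagonal_eq_sum_range_succ_mk] at this
    simp [Finset.sum_range_succ, E, coeff_exp, constantCoeff_exp] at this
  apply mul_right_cancel₀ hne
  have factor : E^2 - 1 = (E - 1) * (E + 1) := by ring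
  calc B2 * (E - 1) * (E^2 - 1) = (B2 * (E^2 - 1)) * (E - 1) := by ring
    _ = C (2:ℚ) * X * (E - 1) := by rw [hB2]
    _ = (2 * B - 2 * B2) * (E^2 - 1) := by
        rw [factor]
        have : (2 * B - 2 * B2) * ((E - 1) * (E + 1)) = 2 * (B * (E-1)) * (E+1) - 2 * (B2 * ((E-1)*(E+1))) := by ring
        rw [this, ← factor, hB, hB2]
        have h2 : (C (2:ℚ) : ℚ⟦X⟧) = 2 := by simp [map_ofNat]
        rw [h2]; ring

lemma aux_two_pow_bernoulli (N : ℕ) :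
    ∑ j ∈ range N, (N.choose j : ℚ) * 2^j * bernoulli j = (2 - 2^(N+1)) * bernoulli N := by
  rcases N with _ | n
  · simp
  have h := congrArg (coeff (R := ℚ) (n+1)) aux_ps
  rw [show (2 : ℚ⟦X⟧) = C (2:ℚ) from by rw [map_ofNat]] at h
  rw [coeff_mul, Finset.Nat.sum_antidiagonal_eq_sum_range_succ_mk, map_sub, coeff_C_mul,
    coeff_C_mul] at h
  simp only [map_sub, bernoulliPowerSeries, coeff_rescale, coeff_mk, coeff_exp, coeff_one,
    Algebra.algebraMap_self_apply] at h
  rw [Finset.sum_range_succ, Nat.sub_self] at h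
  norm_num at h
  have hfac : ∀ k : ℕ, ((k)! : ℚ) ≠ 0 := fun k => mod_cast Nat.factorial_ne_zero k
  calc ∑ j ∈ Finset.range (n+1), ((n+1).choose j : ℚ) * 2^j * bernoulli j
      = ((n+1)! : ℚ) * ∑ x ∈ Finset.range (n+1),
          2^x * (bernoulli x / (x ! : ℚ)) * ((((n+1-x))! : ℚ)⁻¹ - if n+1-x = 0 then 1 else 0) := by
        rw [Finset.mul_sum]
        refine Finset.sum_congr rfl fun j hj => ?_
        have hj' : j ≤ n + 1 := by simp at hj; omega
        rw [if_neg (by simp at hj; omega)]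
        have hcq : ((n+1).choose j : ℚ) * (j ! : ℚ) * (((n+1-j))! : ℚ) = (((n+1))! : ℚ) := by
          exact_mod_cast congrArg (fun t : ℕ => (t : ℚ)) (Nat.choose_mul_factorial_mul_factorial hj')
        rw [← hcq]
        field_simp
        ring
    _ = ((n+1)! : ℚ) * (2 * (bernoulli (n+1) / ((n+1)! : ℚ))
          - 2 * (2^(n+1) * (bernoulli (n+1) / ((n+1)! : ℚ)))) := by rw [h]
    _ = (2 - 2^(n+1+1)) * bernoulli (n+1) := by
        field_simp
        ring

/-- Values of Euler polynomials at 0 : `ee s = E_s(0) = 2(1-2^(s+1)) B_(s+1) / (s+1)`. -/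
noncomputable def ee (s : ℕ) : ℚ := 2 * (1 - 2^(s+1)) * bernoulli (s+1) / ((s : ℚ)+1)

lemma ee_zero : ee 0 = 1 := by
  simp [ee, bernoulli_one]
  norm_num

lemma ee_rec (d : ℕ) (hd : 1 ≤ d) :
    ∑ i ∈ range (d+1), (d.choose i : ℚ) * ee i + ee d = 0 := by
  have hd1 : ((d:ℚ)+1) ≠ 0 := by positivity
  have step : ∀ i ∈ range (d+1), (d.choose i : ℚ) * ee i
      = (2/((d:ℚ)+1)) * (((d+1).choose (i+1) : ℚ) * ((1 - 2^(i+1)) * bernoulli (i+1))) := by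
    intro i _
    have hc : ((d+1).choose (i+1) : ℚ) * ((i:ℚ)+1) = ((d:ℚ)+1) * (d.choose i : ℚ) := by
      exact_mod_cast congrArg (fun t : ℕ => (t:ℚ)) (Nat.add_one_mul_choose_eq d i).symm
    have hi1 : ((i:ℚ)+1) ≠ 0 := by positivity
    have hc' : ((d+1).choose (i+1) : ℚ) = ((d:ℚ)+1) * (d.choose i : ℚ) / ((i:ℚ)+1) := by
      rw [eq_div_iff hi1]; exact hc
    rw [hc']
    unfold ee
    field_simp
  rw [Finset.sum_congr rfl step, ← Finset.mul_sum]
  have key : ∑ i ∈ range (d+1), (((d+1).choose (i+1) : ℚ) * ((1 - 2^(i+1)) * bernoulli (i+1)))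
      = (2^(d+1) - 1) * bernoulli (d+1) := by
    have h0 : ∑ j ∈ range (d+2), (((d+1).choose j : ℚ) * ((1 - 2^j) * bernoulli j))
        = ∑ i ∈ range (d+1), (((d+1).choose (i+1) : ℚ) * ((1 - 2^(i+1)) * bernoulli (i+1))) := by
      rw [Finset.sum_range_succ']
      simp
    rw [← h0]
    have h1 : ∀ j ∈ range (d+2), (((d+1).choose j : ℚ) * ((1 - 2^j) * bernoulli j))
        = ((d+1).choose j : ℚ) * bernoulli j - ((d+1).choose j : ℚ) * 2^j * bernoulli j := by
      intro j _; ring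
    rw [Finset.sum_congr rfl h1, Finset.sum_sub_distrib]
    rw [Finset.sum_range_succ, Finset.sum_range_succ
      (f := fun j => ((d+1).choose j : ℚ) * 2^j * bernoulli j)]
    rw [sum_bernoulli, aux_two_pow_bernoulli (d+1), if_neg (by omega)]
    simp
    ring
  rw [key]
  unfold ee
  field_simp
  ring

lemma choose_swap (s i r : ℕ) (hi : i ≤ s) (hr : r ≤ s) :
    s.choose i * (s-i).choose r = s.choose r * (s-r).choose i := by
  rcases le_or_gt (i + r) s with h | h
  · rw [← Nat.choose_symm hi, Nat.choose_mul (n := s) (k := s - i) (s := r) (by omega)]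
    rw [show s - i - r = (s - r) - i by omega, Nat.choose_symm (by omega)]
  · rw [Nat.choose_eq_zero_of_lt (show s - i < r by omega),
      Nat.choose_eq_zero_of_lt (show s - r < i by omega)]
    simp

/-- Euler polynomial `E_s(x) = ∑ C(s,i) ee i x^(s-i)`. -/
noncomputable def EE (s : ℕ) (x : ℚ) : ℚ := ∑ i ∈ range (s+1), (s.choose i : ℚ) * ee i * x^(s-i)

lemma EE_zero (s : ℕ) : EE s 0 = ee s := by
  unfold EE
  rw [Finset.sum_eq_single s]
  · simp
  · intro i hi hne
    rw [zero_pow (by simp at hi; omega), mul_zero]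
  · simp

lemma EE_shift (s : ℕ) (hs : 1 ≤ s) (x : ℚ) : EE s (x+1) + EE s x = 2 * x^s := by
  have expand : ∀ i ∈ range (s+1), ((x+1)^(s-i) : ℚ)
      = ∑ r ∈ range (s+1), ((s-i).choose r : ℚ) * x^r := by
    intro i hi
    rw [add_pow]
    rw [← Finset.sum_subset (Finset.range_subset_range.mpr (show s-i+1 ≤ s+1 by omega))]
    · exact Finset.sum_congr rfl fun r _ => by ring
    · intro r hr hnr
      simp only [Finset.mem_range] at hr hnr
      rw [Nat.choose_eq_zero_of_lt (by omega)]
      simp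
  have h1 : EE s (x+1) = ∑ r ∈ range (s+1), (s.choose r : ℚ) * x^r *
      ∑ i ∈ range (s+1), ((s-r).choose i : ℚ) * ee i := by
    unfold EE
    rw [Finset.sum_congr rfl (fun i hi => by rw [expand i hi])]
    simp only [Finset.mul_sum]
    rw [Finset.sum_comm]
    refine Finset.sum_congr rfl fun r hr => ?_
    refine Finset.sum_congr rfl fun i hi => ?_
    simp only [Finset.mem_range] at hr hi
    have hcc : (s.choose i : ℚ) * ((s-i).choose r : ℚ) = (s.choose r : ℚ) * ((s-r).choose i : ℚ) := by
      exact_mod_cast congrArg (fun t : ℕ => (t:ℚ)) (choose_swap s i r (by omega) (by omega))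
    linear_combination (ee i * x^r) * hcc
  have h2 : EE s x = ∑ r ∈ range (s+1), (s.choose r : ℚ) * ee (s-r) * x^r := by
    unfold EE
    rw [← Finset.sum_range_reflect]
    refine Finset.sum_congr rfl fun r hr => ?_
    simp only [Finset.mem_range] at hr
    rw [show s + 1 - 1 - r = s - r by omega, show s - (s - r) = r by omega,
      Nat.choose_symm (by omega)]
  rw [h1, h2, ← Finset.sum_add_distrib]
  have h3 : ∀ r ∈ range (s+1), ((s.choose r : ℚ) * x^r *
        ∑ i ∈ range (s+1), ((s-r).choose i : ℚ) * ee i)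
        + (s.choose r : ℚ) * ee (s-r) * x^r
      = if r = s then 2 * x^s else 0 := by
    intro r hr
    simp only [Finset.mem_range] at hr
    have inner : ∑ i ∈ range (s+1), ((s-r).choose i : ℚ) * ee i
        = ∑ i ∈ range (s-r+1), ((s-r).choose i : ℚ) * ee i := by
      rw [← Finset.sum_subset (Finset.range_subset_range.mpr (show s-r+1 ≤ s+1 by omega))]
      intro i hi hni
      simp only [Finset.mem_range] at hi hni
      rw [Nat.choose_eq_zero_of_lt (by omega)]
      simp
    rcases eq_or_ne r s with h | h
    · subst h
      rw [if_pos rfl]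
      have inner0 : ∀ i ∈ range (r+1), ((r-r).choose i : ℚ) * ee i
          = if i = 0 then (1:ℚ) else 0 := by
        intro i _
        rcases i with _ | i
        · simp [ee_zero]
        · simp [Nat.sub_self, Nat.choose_zero_succ]
      rw [Finset.sum_congr rfl inner0, Finset.sum_ite_eq' (range (r+1)) 0]
      simp [ee_zero]
      ring
    · rw [if_neg h, inner]
      have := ee_rec (s-r) (by omega)
      have hz : ∑ i ∈ range (s-r+1), ((s-r).choose i : ℚ) * ee i = - ee (s-r) := by
        linarith [this]
      rw [hz]
      ring
  rw [Finset.sum_congr rfl h3, Finset.sum_ite_eq' (range (s+1)) s]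
  simp

lemma S_eq (s : ℕ) (hs : 1 ≤ s) (k : ℕ) :
    ∑ j ∈ Finset.Ico 1 k, (-1:ℚ)^(j-1) * (j:ℚ)^s = (-(ee s) + (-1:ℚ)^k * EE s k)/2 := by
  have hs0 : s ≠ 0 := by omega
  have hrange : ∀ K : ℕ, ∑ j ∈ range K, (-1:ℚ)^(j-1) * (j:ℚ)^s
      = (-(ee s) + (-1:ℚ)^K * EE s K)/2 := by
    intro K
    induction K with
    | zero => simp [EE_zero]
    | succ k ih =>
      rw [Finset.sum_range_succ, ih]
      have hsh := EE_shift s hs (k : ℚ)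
      have hcast : ((k+1 : ℕ) : ℚ) = (k : ℚ) + 1 := by push_cast; ring
      rw [hcast]
      have hknz : (-1:ℚ)^(k-1) * (k:ℚ)^s = (-1:ℚ)^(k+1) * (k:ℚ)^s := by
        rcases k with _ | k
        · simp [zero_pow hs0]
        · rw [Nat.add_sub_cancel, pow_succ, pow_succ]
          ring
      rw [hknz, pow_succ]
      rw [show EE s ((k:ℚ)+1) = 2 * (k:ℚ)^s - EE s (k:ℚ) by linarith [hsh]]
      ring
  rcases k with _ | k
  · simp [EE_zero]
  · have h0 : ∑ j ∈ range (k+1), (-1:ℚ)^(j-1) * (j:ℚ)^s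
        = (-1:ℚ)^(0-1) * ((0:ℕ):ℚ)^s + ∑ j ∈ Finset.Ico 1 (k+1), (-1:ℚ)^(j-1) * (j:ℚ)^s := by
      rw [Finset.range_eq_Ico]
      exact Finset.sum_eq_sum_Ico_succ_bot (by omega) _
    have hr := hrange (k+1)
    rw [h0] at hr
    simp only [Nat.cast_zero, zero_pow hs0, mul_zero, zero_add] at hr
    exact hr


/-- Genocchi's sum formula: for `m ≥ n > 1`,
`2^m · (2^n - 1) · B_n = n · ∑_{k=2}^{m} C(m, k) · ∑_{j=1}^{k-1} (-1)^{j-1} · j^{n-1}`. -/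
theorem genocchi_sum_formula (m n : ℕ) (hmn : n ≤ m) (hn : 1 < n) :
    (2 : ℚ) ^ m * ((2 : ℚ) ^ n - 1) * bernoulli n
      = (n : ℚ) * ∑ k ∈ Finset.Icc 2 m, (Nat.choose m k : ℚ) *
          ∑ j ∈ Finset.Ico 1 k, (-1 : ℚ) ^ (j - 1) * (j : ℚ) ^ (n - 1) := by
  obtain ⟨s, rfl⟩ : ∃ s, n = s + 1 := ⟨n-1, by omega⟩
  have hs : 1 ≤ s := by omega
  simp only [Nat.add_sub_cancel]
  rw [Finset.sum_congr rfl (fun k _ => by rw [S_eq s hs k])]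
  have hext : ∑ k ∈ Finset.Icc 2 m, (m.choose k : ℚ) * ((-(ee s) + (-1:ℚ)^k * EE s k)/2)
      = ∑ k ∈ range (m+1), (m.choose k : ℚ) * ((-(ee s) + (-1:ℚ)^k * EE s k)/2) := by
    apply Finset.sum_subset
    · intro k hk
      simp only [Finset.mem_Icc] at hk
      simp only [Finset.mem_range]
      omega
    · intro k hk hnk
      simp only [Finset.mem_range, Finset.mem_Icc, not_and, not_le] at hk hnk
      have hk01 : k = 0 ∨ k = 1 := by omega
      rcases hk01 with rfl | rfl
      · simp [EE_zero]
      · have hE1 : EE s 1 = - ee s := by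
          unfold EE
          simp only [one_pow, mul_one]
          have := ee_rec s hs
          linarith
        simp [hE1]
  rw [hext]
  have hsplit : ∑ k ∈ range (m+1), (m.choose k : ℚ) * ((-(ee s) + (-1:ℚ)^k * EE s k)/2)
      = (-(ee s)/2) * ∑ k ∈ range (m+1), (m.choose k : ℚ)
        + (1/2) * ∑ k ∈ range (m+1), (m.choose k : ℚ) * (-1:ℚ)^k * EE s k := by
    rw [Finset.mul_sum, Finset.mul_sum, ← Finset.sum_add_distrib]
    exact Finset.sum_congr rfl fun k _ => by ring
  rw [hsplit]
  have hchoose : ∑ k ∈ range (m+1), (m.choose k : ℚ) = 2^m := by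
    exact_mod_cast congrArg (fun t : ℕ => (t:ℚ)) (Nat.sum_range_choose m)
  have hvanish : ∑ k ∈ range (m+1), (m.choose k : ℚ) * (-1:ℚ)^k * EE s (k : ℚ) = 0 := by
    unfold EE
    have hsw : ∀ k ∈ range (m+1), (m.choose k : ℚ) * (-1:ℚ)^k *
          ∑ i ∈ range (s+1), (s.choose i : ℚ) * ee i * ((k:ℚ))^(s-i)
        = ∑ i ∈ range (s+1), (s.choose i : ℚ) * ee i *
            ((-1:ℚ)^k * (m.choose k : ℚ) * (k:ℚ)^(s-i)) := by
      intro k _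
      rw [Finset.mul_sum]
      exact Finset.sum_congr rfl fun i _ => by ring
    rw [Finset.sum_congr rfl hsw, Finset.sum_comm]
    apply Finset.sum_eq_zero
    intro i hi
    rw [← Finset.mul_sum, aux_altsum m (s-i) (by omega), mul_zero]
  rw [hchoose, hvanish]
  unfold ee
  have hq : ((s:ℚ)+1) ≠ 0 := by positivity
  push_cast
  field_simp
  ring
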